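/- Let G be the group with presentation ⟨a₁, a₂, y | a₁a₂a₁ = a₂a₁a₂, y·a₁·y⁻¹ = a₁⁻¹, y·a₂·y⁻¹ = a₂⁻¹, y² = 1, (a₁a₂)⁶ = 1⟩. Then the subgroup H generated by a₁ and a₂ has index 2 in G, and H is isomorphic to the group ⟨a, b | aba = bab, (ab)⁶ = 1⟩. -/
import Mathlib


/-- Relations of the Birman–Chillingworth presentation of `M(N₃)`:
generators `a₁ = 0`, `a₂ = 1`, `y = 2`, relations `a₁a₂a₁ = a₂a₁a₂`,
`y a₁ y⁻¹ = a₁⁻¹`, `y a₂ y⁻¹ = a₂⁻¹`, `y² = 1`, `(a₁a₂)⁶ = 1`. -/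
def mcgN3Rels : Set (FreeGroup (Fin 3)) :=
  { FreeGroup.of 0 * FreeGroup.of 1 * FreeGroup.of 0 *
      (FreeGroup.of 1 * FreeGroup.of 0 * FreeGroup.of 1)⁻¹,
    FreeGroup.of 2 * FreeGroup.of 0 * (FreeGroup.of 2)⁻¹ * FreeGroup.of 0,
    FreeGroup.of 2 * FreeGroup.of 1 * (FreeGroup.of 2)⁻¹ * FreeGroup.of 1,
    (FreeGroup.of 2) ^ 2,
    (FreeGroup.of 0 * FreeGroup.of 1) ^ 6 }

/-- Relations of `⟨a, b | aba = bab, (ab)⁶ = 1⟩`. -/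
def twistRels3' : Set (FreeGroup (Fin 2)) :=
  { FreeGroup.of 0 * FreeGroup.of 1 * FreeGroup.of 0 *
      (FreeGroup.of 1 * FreeGroup.of 0 * FreeGroup.of 1)⁻¹,
    (FreeGroup.of 0 * FreeGroup.of 1) ^ 6 }

section Aux

lemma pg_rel_eq_one {α : Type*} {rels : Set (FreeGroup α)} {r : FreeGroup α} (h : r ∈ rels) :
    PresentedGroup.mk rels r = 1 :=
  (QuotientGroup.eq_one_iff r).mpr (Subgroup.subset_normalClosure h)

lemma pg_mk_of {α : Type*} {rels : Set (FreeGroup α)} (x : α) :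
    PresentedGroup.mk rels (FreeGroup.of x) = PresentedGroup.of x := rfl

-- relations in G
lemma G_braid : (PresentedGroup.of (rels := mcgN3Rels) 0) * .of 1 * .of 0
    = PresentedGroup.of 1 * .of 0 * .of 1 := by
  have h := pg_rel_eq_one (rels := mcgN3Rels)
    (r := FreeGroup.of 0 * FreeGroup.of 1 * FreeGroup.of 0 *
      (FreeGroup.of 1 * FreeGroup.of 0 * FreeGroup.of 1)⁻¹) (by simp [mcgN3Rels])
  simp only [map_mul, map_inv, pg_mk_of] at h
  exact mul_inv_eq_one.mp h

lemma G_conj0 : (PresentedGroup.of (rels := mcgN3Rels) 2) * .of 0 * (.of 2)⁻¹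
    = (PresentedGroup.of 0)⁻¹ := by
  have h := pg_rel_eq_one (rels := mcgN3Rels)
    (r := FreeGroup.of 2 * FreeGroup.of 0 * (FreeGroup.of 2)⁻¹ * FreeGroup.of 0)
    (by simp [mcgN3Rels])
  simp only [map_mul, map_inv, pg_mk_of] at h
  exact eq_inv_of_mul_eq_one_left h

lemma G_conj1 : (PresentedGroup.of (rels := mcgN3Rels) 2) * .of 1 * (.of 2)⁻¹
    = (PresentedGroup.of 1)⁻¹ := by
  have h := pg_rel_eq_one (rels := mcgN3Rels)
    (r := FreeGroup.of 2 * FreeGroup.of 1 * (FreeGroup.of 2)⁻¹ * FreeGroup.of 1)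
    (by simp [mcgN3Rels])
  simp only [map_mul, map_inv, pg_mk_of] at h
  exact eq_inv_of_mul_eq_one_left h

lemma G_ysq : (PresentedGroup.of (rels := mcgN3Rels) 2) ^ 2 = 1 := by
  have h := pg_rel_eq_one (rels := mcgN3Rels) (r := (FreeGroup.of 2) ^ 2)
    (by simp [mcgN3Rels])
  simpa only [map_pow, pg_mk_of] using h

lemma G_six : ((PresentedGroup.of (rels := mcgN3Rels) 0) * .of 1) ^ 6 = 1 := by
  have h := pg_rel_eq_one (rels := mcgN3Rels) (r := (FreeGroup.of 0 * FreeGroup.of 1) ^ 6)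
    (by simp [mcgN3Rels])
  simpa only [map_pow, map_mul, pg_mk_of] using h

-- relations in T
lemma T_braid : (PresentedGroup.of (rels := twistRels3') 0) * .of 1 * .of 0
    = PresentedGroup.of 1 * .of 0 * .of 1 := by
  have h := pg_rel_eq_one (rels := twistRels3')
    (r := FreeGroup.of 0 * FreeGroup.of 1 * FreeGroup.of 0 *
      (FreeGroup.of 1 * FreeGroup.of 0 * FreeGroup.of 1)⁻¹) (by simp [twistRels3'])
  simp only [map_mul, map_inv, pg_mk_of] at h
  exact mul_inv_eq_one.mp h

lemma T_six : ((PresentedGroup.of (rels := twistRels3') 0) * .of 1) ^ 6 = 1 := by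
  have h := pg_rel_eq_one (rels := twistRels3') (r := (FreeGroup.of 0 * FreeGroup.of 1) ^ 6)
    (by simp [twistRels3'])
  simpa only [map_pow, map_mul, pg_mk_of] using h

end Aux

section Homs

open PresentedGroup

local notation "G3" => PresentedGroup mcgN3Rels
local notation "T2" => PresentedGroup twistRels3'

/-- the inversion endomorphism of `T`. -/
noncomputable def sigmaH : T2 →* T2 :=
  PresentedGroup.toGroup (f := ![(PresentedGroup.of 0)⁻¹, (PresentedGroup.of 1)⁻¹]) (by
    intro r hr
    rcases hr with h | h
    · subst h
      simp only [map_mul, map_inv, FreeGroup.lift_apply_of, Matrix.cons_val_zero, Matrix.cons_val_one,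
        Matrix.head_cons]
      rw [show ((PresentedGroup.of (rels := twistRels3') 0))⁻¹ * (PresentedGroup.of 1)⁻¹ *
          (PresentedGroup.of 0)⁻¹
        = ((PresentedGroup.of 0) * (PresentedGroup.of 1) * (PresentedGroup.of 0))⁻¹ by group,
        T_braid]
      group
    · rw [Set.mem_singleton_iff] at h
      subst h
      simp only [map_pow, map_mul, map_inv, FreeGroup.lift_apply_of, Matrix.cons_val_zero,
        Matrix.cons_val_one, Matrix.head_cons]
      have hsix : ((PresentedGroup.of (rels := twistRels3') 1) * (PresentedGroup.of 0)) ^ 6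
          = 1 := by
        rw [show ((PresentedGroup.of (rels := twistRels3') 1) * (PresentedGroup.of 0)) ^ 6
          = (PresentedGroup.of 0)⁻¹ *
            (((PresentedGroup.of 0) * (PresentedGroup.of 1)) ^ 6) * PresentedGroup.of 0 by
            simp [pow_succ, mul_assoc], T_six]
        simp
      rw [show ((PresentedGroup.of (rels := twistRels3') 0)⁻¹ * (PresentedGroup.of 1)⁻¹) ^ 6
        = ((((PresentedGroup.of 1) * (PresentedGroup.of 0)) ^ 6)⁻¹) by
          simp [pow_succ, mul_assoc, mul_inv_rev], hsix]
      simp)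

lemma sigmaH_of0 : sigmaH (PresentedGroup.of 0) = (PresentedGroup.of 0)⁻¹ := by
  simp [sigmaH, PresentedGroup.toGroup.of]

lemma sigmaH_of1 : sigmaH (PresentedGroup.of 1) = (PresentedGroup.of 1)⁻¹ := by
  simp [sigmaH, PresentedGroup.toGroup.of]

lemma sigmaH_sigmaH (t : T2) : sigmaH (sigmaH t) = t := by
  have h : sigmaH.comp sigmaH = MonoidHom.id T2 := by
    refine PresentedGroup.ext fun x => ?_
    fin_cases x <;>
      simp [sigmaH_of0, sigmaH_of1]
  exact DFunLike.congr_fun h t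

end Homs

section Homs2

local notation "G3" => PresentedGroup mcgN3Rels
local notation "T2" => PresentedGroup twistRels3'

/-- inversion as a permutation of `T` -/
noncomputable def sigmaE : Equiv.Perm T2 :=
  ⟨sigmaH, sigmaH, sigmaH_sigmaH, sigmaH_sigmaH⟩

/-- left regular representation -/
noncomputable def mlT : T2 →* Equiv.Perm T2 := MulAction.toPermHom T2 T2

lemma mlT_apply (x t : T2) : mlT x t = x * t := rfl

lemma mlT_injective : Function.Injective mlT := by
  intro x y h
  have := congrArg (fun p : Equiv.Perm T2 => p 1) h
  simpa [mlT_apply] using this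

/-- the map T → G -/
noncomputable def fTG : T2 →* G3 :=
  PresentedGroup.toGroup
    (f := ![PresentedGroup.of 0, PresentedGroup.of 1]) (by
    intro r hr
    rcases hr with h | h
    · subst h
      simp only [map_mul, map_inv, FreeGroup.lift_apply_of, Matrix.cons_val_zero, Matrix.cons_val_one,
        Matrix.head_cons]
      rw [G_braid]; group
    · rw [Set.mem_singleton_iff] at h; subst h
      simp only [map_pow, map_mul, FreeGroup.lift_apply_of, Matrix.cons_val_zero, Matrix.cons_val_one,
        Matrix.head_cons]
      exact G_six)

lemma fTG_of0 : fTG (PresentedGroup.of 0) = PresentedGroup.of 0 := by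
  simp [fTG, PresentedGroup.toGroup.of]

lemma fTG_of1 : fTG (PresentedGroup.of 1) = PresentedGroup.of 1 := by
  simp [fTG, PresentedGroup.toGroup.of]

/-- the representation G → Perm T -/
noncomputable def PhiG : G3 →* Equiv.Perm T2 :=
  PresentedGroup.toGroup
    (f := ![mlT (PresentedGroup.of 0), mlT (PresentedGroup.of 1), sigmaE]) (by
    intro r hr
    rcases hr with h | h | h | h | h
    · subst h
      simp only [map_mul, map_inv, FreeGroup.lift_apply_of, Matrix.cons_val_zero, Matrix.cons_val_one,
        Matrix.head_cons]
      have hb : mlT (PresentedGroup.of 0) * mlT (PresentedGroup.of 1) * mlT (PresentedGroup.of 0)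
          = mlT (PresentedGroup.of 1) * mlT (PresentedGroup.of 0)
            * mlT (PresentedGroup.of 1) := by
        rw [← map_mul, ← map_mul, ← map_mul, ← map_mul, T_braid]
      rw [hb]; group
    · subst h
      simp only [map_mul, map_inv, FreeGroup.lift_apply_of, Matrix.cons_val_zero, Matrix.cons_val_one,
        Matrix.head_cons]
      ext t
      simp only [Equiv.Perm.mul_apply, Equiv.Perm.one_apply, Equiv.Perm.inv_def]
      show sigmaE (mlT _ (sigmaE.symm (mlT _ t))) = t
      have hsymm : ∀ u : T2, sigmaE.symm u = sigmaH u := fun u => rfl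
      have hfwd : ∀ u : T2, sigmaE u = sigmaH u := fun u => rfl
      rw [hsymm, hfwd, mlT_apply, mlT_apply]
      simp only [map_mul, map_inv, sigmaH_of0, sigmaH_sigmaH]
      group
    · subst h
      simp only [map_mul, map_inv, FreeGroup.lift_apply_of, Matrix.cons_val_zero, Matrix.cons_val_one,
        Matrix.head_cons]
      ext t
      simp only [Equiv.Perm.mul_apply, Equiv.Perm.one_apply, Equiv.Perm.inv_def]
      show sigmaE (mlT _ (sigmaE.symm (mlT _ t))) = t
      have hsymm : ∀ u : T2, sigmaE.symm u = sigmaH u := fun u => rfl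
      have hfwd : ∀ u : T2, sigmaE u = sigmaH u := fun u => rfl
      rw [hsymm, hfwd, mlT_apply, mlT_apply]
      simp only [map_mul, map_inv, sigmaH_of1, sigmaH_sigmaH]
      group
    · subst h
      simp only [map_pow, FreeGroup.lift_apply_of, Matrix.cons_val_two, Matrix.tail_cons,
        Matrix.head_cons]
      ext t
      simp only [sq, Equiv.Perm.mul_apply, Equiv.Perm.one_apply]
      exact sigmaH_sigmaH t
    · rw [Set.mem_singleton_iff] at h; subst h
      simp only [map_pow, map_mul, FreeGroup.lift_apply_of, Matrix.cons_val_zero, Matrix.cons_val_one,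
        Matrix.head_cons]
      rw [← map_mul, ← map_pow, T_six, map_one])

lemma PhiG_comp_fTG : PhiG.comp fTG = mlT := by
  refine PresentedGroup.ext fun x => ?_
  fin_cases x <;>
    simp [fTG_of0, fTG_of1, PhiG, PresentedGroup.toGroup.of]

lemma fTG_injective : Function.Injective fTG := by
  have h : Function.Injective (PhiG.comp fTG) := by
    rw [PhiG_comp_fTG]; exact mlT_injective
  exact Function.Injective.of_comp h

lemma fTG_range : fTG.range =
    Subgroup.closure {PresentedGroup.of (rels := mcgN3Rels) 0,
      PresentedGroup.of (rels := mcgN3Rels) 1} := by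
  rw [MonoidHom.range_eq_map, ← PresentedGroup.closure_range_of twistRels3',
    MonoidHom.map_closure]
  congr 1
  ext x
  simp only [Set.mem_image, Set.mem_range, Set.mem_insert_iff, Set.mem_singleton_iff]
  constructor
  · rintro ⟨y, ⟨i, rfl⟩, rfl⟩
    fin_cases i
    · left; exact fTG_of0
    · right; exact fTG_of1
  · rintro (rfl | rfl)
    · exact ⟨_, ⟨0, rfl⟩, fTG_of0⟩
    · exact ⟨_, ⟨1, rfl⟩, fTG_of1⟩

end Homs2

section Index

open Pointwise

local notation "G3" => PresentedGroup mcgN3Rels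

/-- the sign homomorphism `G → Z/2` -/
noncomputable def phi2 : G3 →* Multiplicative (ZMod 2) :=
  PresentedGroup.toGroup (f := ![1, 1, Multiplicative.ofAdd 1]) (by
    intro r hr
    rcases hr with h | h | h | h | h
    all_goals first
      | (subst h
         simp only [map_mul, map_inv, map_pow, FreeGroup.lift_apply_of, Matrix.cons_val_zero,
           Matrix.cons_val_one, Matrix.head_cons, Matrix.cons_val_two, Matrix.tail_cons]
         decide)
      | (rw [Set.mem_singleton_iff] at h
         subst h
         simp only [map_mul, map_inv, map_pow, FreeGroup.lift_apply_of, Matrix.cons_val_zero,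
           Matrix.cons_val_one, Matrix.head_cons, Matrix.cons_val_two, Matrix.tail_cons]
         decide))

lemma phi2_of0 : phi2 (PresentedGroup.of 0) = 1 := by
  simp [phi2, PresentedGroup.toGroup.of]

lemma phi2_of1 : phi2 (PresentedGroup.of 1) = 1 := by
  simp [phi2, PresentedGroup.toGroup.of]

lemma phi2_of2 : phi2 (PresentedGroup.of 2) = Multiplicative.ofAdd 1 := by
  simp [phi2, PresentedGroup.toGroup.of]

/-- the twist subgroup -/
noncomputable def KSub : Subgroup G3 :=
  Subgroup.closure {PresentedGroup.of (rels := mcgN3Rels) 0,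
    PresentedGroup.of (rels := mcgN3Rels) 1}

lemma yy_one : (PresentedGroup.of (rels := mcgN3Rels) 2) * PresentedGroup.of 2 = 1 := by
  have := G_ysq; rwa [sq] at this

lemma K_conj : ∀ k ∈ KSub, (PresentedGroup.of (rels := mcgN3Rels) 2) * k *
    (PresentedGroup.of 2)⁻¹ ∈ KSub := by
  intro k hk
  induction hk using Subgroup.closure_induction with
  | mem x hx =>
    rcases hx with rfl | rfl
    · rw [G_conj0]
      exact inv_mem (Subgroup.subset_closure (by left; rfl))
    · rw [G_conj1]
      exact inv_mem (Subgroup.subset_closure (by right; rfl))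
  | one => simpa using one_mem KSub
  | mul x y hx hy ihx ihy =>
    have h : (PresentedGroup.of (rels := mcgN3Rels) 2) * (x * y) * (PresentedGroup.of 2)⁻¹
        = ((PresentedGroup.of 2) * x * (PresentedGroup.of 2)⁻¹)
          * ((PresentedGroup.of 2) * y * (PresentedGroup.of 2)⁻¹) := by group
    rw [h]; exact mul_mem ihx ihy
  | inv x hx ih =>
    have h : (PresentedGroup.of (rels := mcgN3Rels) 2) * x⁻¹ * (PresentedGroup.of 2)⁻¹
        = ((PresentedGroup.of 2) * x * (PresentedGroup.of 2)⁻¹)⁻¹ := by group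
    rw [h]; exact inv_mem ih

instance K_normal : KSub.Normal := by
  rw [← Subgroup.normalizer_eq_top_iff]
  rw [eq_top_iff, ← PresentedGroup.closure_range_of mcgN3Rels, Subgroup.closure_le]
  rintro x ⟨i, rfl⟩
  fin_cases i
  · exact Subgroup.le_normalizer (Subgroup.subset_closure (by left; rfl))
  · exact Subgroup.le_normalizer (Subgroup.subset_closure (by right; rfl))
  · rw [SetLike.mem_coe, Subgroup.mem_normalizer_iff]
    intro h
    constructor
    · exact fun hh => K_conj h hh
    · intro hh
      have hh' : (PresentedGroup.of (rels := mcgN3Rels) 2) * h * (PresentedGroup.of 2)⁻¹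
          ∈ KSub := hh
      have h2 := K_conj _ hh' 
      have heq : (PresentedGroup.of (rels := mcgN3Rels) 2) *
          ((PresentedGroup.of 2) * h * (PresentedGroup.of 2)⁻¹) * (PresentedGroup.of 2)⁻¹
          = ((PresentedGroup.of 2) * (PresentedGroup.of 2)) * h *
            (((PresentedGroup.of 2) * (PresentedGroup.of 2)))⁻¹ := by group
      rw [heq, yy_one] at h2
      simpa using h2

lemma K_sup : KSub ⊔ Subgroup.zpowers (PresentedGroup.of (rels := mcgN3Rels) 2) = ⊤ := by
  rw [eq_top_iff, ← PresentedGroup.closure_range_of mcgN3Rels, Subgroup.closure_le]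
  rintro x ⟨i, rfl⟩
  fin_cases i
  · exact Subgroup.mem_sup_left (Subgroup.subset_closure (by left; rfl))
  · exact Subgroup.mem_sup_left (Subgroup.subset_closure (by right; rfl))
  · exact Subgroup.mem_sup_right (Subgroup.mem_zpowers _)

lemma K_le_ker : KSub ≤ phi2.ker := by
  rw [KSub, Subgroup.closure_le]
  rintro x (rfl | rfl)
  · simp [MonoidHom.mem_ker, phi2_of0]
  · simp [MonoidHom.mem_ker, phi2_of1]

lemma ker_le_K : phi2.ker ≤ KSub := by
  intro g hg
  have hgmem : g ∈ (KSub : Set G3) *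
      (Subgroup.zpowers (PresentedGroup.of (rels := mcgN3Rels) 2) : Set G3) := by
    rw [← Subgroup.normal_mul, K_sup]; trivial
  rcases Set.mem_mul.mp hgmem with ⟨k, hk, z, hz, rfl⟩
  rcases Subgroup.mem_zpowers_iff.mp hz with ⟨n, rfl⟩
  rcases Int.even_or_odd n with ⟨m, rfl⟩ | ⟨m, rfl⟩
  · have h1 : (PresentedGroup.of (rels := mcgN3Rels) 2) ^ (m + m)
        = ((PresentedGroup.of 2) * (PresentedGroup.of 2)) ^ m := by
      rw [zpow_add, ← (Commute.refl (PresentedGroup.of (rels := mcgN3Rels) 2)).mul_zpow]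
    rw [h1, yy_one, one_zpow, mul_one]
    exact hk
  · have h1 : (PresentedGroup.of (rels := mcgN3Rels) 2) ^ (2 * m + 1)
        = ((PresentedGroup.of 2) * (PresentedGroup.of 2)) ^ m * (PresentedGroup.of 2) := by
      rw [(Commute.refl (PresentedGroup.of (rels := mcgN3Rels) 2)).mul_zpow,
        show (2 * m + 1 : ℤ) = m + m + 1 by ring, zpow_add, zpow_add, zpow_one]
    rw [h1, yy_one, one_zpow, one_mul] at hg ⊢
    exfalso
    rw [MonoidHom.mem_ker, map_mul, K_le_ker hk, one_mul, phi2_of2] at hg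
    exact absurd hg (by decide)

lemma K_eq_ker : KSub = phi2.ker := le_antisymm K_le_ker ker_le_K

lemma phi2_surj : Function.Surjective phi2 := by
  intro z
  have hz : ∀ w : Multiplicative (ZMod 2), w = 1 ∨ w = Multiplicative.ofAdd 1 := by decide
  rcases hz z with rfl | rfl
  · exact ⟨1, map_one _⟩
  · exact ⟨PresentedGroup.of 2, phi2_of2⟩

lemma K_index : KSub.index = 2 := by
  rw [K_eq_ker, Subgroup.index_ker, MonoidHom.range_eq_top.mpr phi2_surj]
  rw [Nat.card_congr Subgroup.topEquiv.toEquiv]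
  rw [Nat.card_congr (Multiplicative.toAdd (α := ZMod 2)), Nat.card_zmod]

end Index


/-- In `G = M(N₃)` with the Birman–Chillingworth presentation, the subgroup
generated by `a₁, a₂` has index 2 and is isomorphic to
`⟨a, b | aba = bab, (ab)⁶ = 1⟩`. -/
theorem stmt4 :
    (Subgroup.closure {PresentedGroup.of (rels := mcgN3Rels) 0,
        PresentedGroup.of (rels := mcgN3Rels) 1}).index = 2 ∧
      Nonempty ((Subgroup.closure {PresentedGroup.of (rels := mcgN3Rels) 0,
          PresentedGroup.of (rels := mcgN3Rels) 1}) ≃*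
        PresentedGroup twistRels3') := by
  constructor
  · exact K_index
  · exact ⟨((MulEquiv.subgroupCongr fTG_range).symm.trans
      (MonoidHom.ofInjective fTG_injective).symm)⟩
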